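/- Lower bound of thickness: if h(·,i,j) : ℝⁿ → ℝ is differentiable with gradient H(y)_i − H(y)_j satisfying ‖H(y)_i − H(y)_j‖₂ ≤ C for all y ∈ B₂(x,ε), and D is supported on B₂(x,ε), then Θ(f,x,D,i,j) = E_{x'∼D}[∫₀¹ h(x(t),i,j) dt] ≥ h(x,i,j) − (ε/2)·C. -/
import Mathlib


open MeasureTheory

/-- Lower bound of thickness: if the gradient of h has norm ≤ C on B₂(x,ε) and D is
supported on B₂(x,ε), then Θ = E_{x'∼D}[∫₀¹ h(x(t)) dt] ≥ h(x) − (ε/2)·C. -/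
theorem stmt3 {n : ℕ} (h : EuclideanSpace ℝ (Fin n) → ℝ)
    (x : EuclideanSpace ℝ (Fin n)) (ε C : ℝ)
    (μ : Measure (EuclideanSpace ℝ (Fin n))) [IsProbabilityMeasure μ]
    (hd : Differentiable ℝ h)
    (hC : ∀ y ∈ Metric.closedBall x ε, ‖fderiv ℝ h y‖ ≤ C)
    (hsupp : ∀ᵐ x' ∂μ, x' ∈ Metric.closedBall x ε) :
    h x - ε / 2 * C ≤
      ∫ x', (∫ t in (0:ℝ)..1, h ((1 - t) • x + t • x')) ∂μ := by
  by_cases hε : 0 ≤ ε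
  swap
  · exfalso
    rw [Metric.closedBall_eq_empty.2 (by linarith)] at hsupp
    simp only [Set.mem_empty_iff_false] at hsupp
    rw [Filter.eventually_false_iff_eq_bot] at hsupp
    exact (Filter.NeBot.ne (ae_neBot.2 (IsProbabilityMeasure.ne_zero μ))) hsupp
  have hC0 : 0 ≤ C := le_trans (norm_nonneg _) (hC x (Metric.mem_closedBall_self hε))
  set g : EuclideanSpace ℝ (Fin n) → ℝ :=
    fun x' => ∫ t in (0:ℝ)..1, h ((1 - t) • x + t • x') with hg
  -- pointwise Lipschitz bound
  have key : ∀ x' ∈ Metric.closedBall x ε, ∀ t ∈ Set.Icc (0:ℝ) 1,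
      |h ((1 - t) • x + t • x') - h x| ≤ C * (ε * t) := by
    intro x' hx' t ht
    have hmem : (1 - t) • x + t • x' ∈ Metric.closedBall x ε := by
      exact (convex_closedBall x ε) (Metric.mem_closedBall_self hε) hx'
        (by linarith [ht.2] : (0:ℝ) ≤ 1 - t) ht.1 (by ring)
    have hb := (convex_closedBall x ε).norm_image_sub_le_of_norm_fderiv_le
      (fun y _ => hd y) hC (Metric.mem_closedBall_self hε) hmem
    have hdist : ‖(1 - t) • x + t • x' - x‖ = t * ‖x' - x‖ := by
      have : (1 - t) • x + t • x' - x = t • (x' - x) := by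
        simp [smul_sub, sub_smul]; abel
      rw [this, norm_smul, Real.norm_eq_abs, abs_of_nonneg ht.1]
    have hxd : ‖x' - x‖ ≤ ε := by
      rw [← dist_eq_norm]; exact Metric.mem_closedBall.1 hx'
    calc |h ((1 - t) • x + t • x') - h x| ≤ C * ‖(1 - t) • x + t • x' - x‖ := hb
      _ = C * (t * ‖x' - x‖) := by rw [hdist]
      _ ≤ C * (ε * t) := by
          have h2 : t * ‖x' - x‖ ≤ t * ε := mul_le_mul_of_nonneg_left hxd ht.1
          nlinarith [hC0]
  have hcont : ∀ x', Continuous fun t : ℝ => h ((1 - t) • x + t • x') := by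
    intro x'
    exact hd.continuous.comp
      (((continuous_const.sub continuous_id).smul continuous_const).add
        (continuous_id.smul continuous_const))
  have hc2 : Continuous fun p : EuclideanSpace ℝ (Fin n) × ℝ => (1 - p.2) • x + p.2 • p.1 :=
    ((continuous_const.sub continuous_snd).smul continuous_const).add
      (continuous_snd.smul continuous_fst)
  have hcg : Continuous g := by
    apply intervalIntegral.continuous_parametric_intervalIntegral_of_continuous'
      (f := fun x' t => h ((1 - t) • x + t • x')) (μ := volume) _ 0 1
    show Continuous fun p : EuclideanSpace ℝ (Fin n) × ℝ => h ((1 - p.2) • x + p.2 • p.1)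
    exact hd.continuous.comp hc2
  -- lower bound on g x'
  have hglb : ∀ x' ∈ Metric.closedBall x ε, h x - ε / 2 * C ≤ g x' := by
    intro x' hx'
    have hint1 : IntervalIntegrable (fun t : ℝ => h x - C * (ε * t)) volume 0 1 :=
      (by continuity : Continuous fun t : ℝ => h x - C * (ε * t)).intervalIntegrable 0 1
    have hint2 : IntervalIntegrable (fun t : ℝ => h ((1 - t) • x + t • x')) volume 0 1 :=
      (hcont x').intervalIntegrable 0 1
    have hmono : ∫ t in (0:ℝ)..1, (h x - C * (ε * t)) ≤ g x' := by
      apply intervalIntegral.integral_mono_on (by norm_num) hint1 hint2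
      intro t ht
      have := key x' hx' t ht
      have := abs_le.1 this
      linarith [this.1]
    have hval : ∫ t in (0:ℝ)..1, (h x - C * (ε * t)) = h x - ε / 2 * C := by
      rw [intervalIntegral.integral_sub (intervalIntegrable_const)
        ((by continuity : Continuous fun t : ℝ => C * (ε * t)).intervalIntegrable 0 1)]
      have : ∫ t in (0:ℝ)..1, C * (ε * t) = C * ε * ∫ t in (0:ℝ)..1, t := by
        rw [← intervalIntegral.integral_const_mul]
        congr 1; ext t; ring
      rw [this, integral_id]
      simp; ring
    linarith
  -- integrability of g
  have hgint : Integrable g μ := by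
    apply Integrable.mono' (integrable_const (|h x| + C * ε)) hcg.aestronglyMeasurable
    filter_upwards [hsupp] with x' hx'
    rw [Real.norm_eq_abs, hg]
    calc |∫ t in (0:ℝ)..1, h ((1 - t) • x + t • x')|
        ≤ (|h x| + C * ε) * |(1:ℝ) - 0| := by
          rw [← Real.norm_eq_abs]
          apply intervalIntegral.norm_integral_le_of_norm_le_const
          intro t ht
          rw [Set.uIoc_of_le (by norm_num : (0:ℝ) ≤ 1)] at ht
          have ht' : t ∈ Set.Icc (0:ℝ) 1 := ⟨le_of_lt ht.1, ht.2⟩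
          have hk := key x' hx' t ht'
          have h1 : |h ((1 - t) • x + t • x')| ≤ |h x| + C * (ε * t) := by
            calc |h ((1 - t) • x + t • x')|
                ≤ |h ((1 - t) • x + t • x') - h x| + |h x| := by
                  have := abs_sub_abs_le_abs_sub (h ((1 - t) • x + t • x')) (h x)
                  linarith [abs_sub_abs_le_abs_sub (h ((1 - t) • x + t • x')) (h x),
                    le_abs_self (h ((1 - t) • x + t • x') - h x)]
              _ ≤ |h x| + C * (ε * t) := by linarith
          have : C * (ε * t) ≤ C * ε := by
            have : ε * t ≤ ε * 1 := mul_le_mul_of_nonneg_left ht'.2 hε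
            nlinarith
          simpa [Real.norm_eq_abs] using le_trans h1 (by linarith)
      _ = |h x| + C * ε := by norm_num
  calc h x - ε / 2 * C = ∫ _, (h x - ε / 2 * C) ∂μ := by simp
    _ ≤ ∫ x', g x' ∂μ := by
        apply integral_mono_ae (integrable_const _) hgint
        filter_upwards [hsupp] with x' hx' using hglb x' hx'
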